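/- arXiv:1801.06915 — 2 statements merged into one kernel-verified Lean document; each statement's English description precedes it below -/
import Mathlib

section
/- Let k be an algebraically closed field of characteristic 2, let n ≥ 3, and let x ∈ sp(2n,k) satisfy x·x = 0 (as matrices) and rank x = 1. Set e := max(8, 2n). Then there exist g₁, …, g_e ∈ Sp(2n,k) such that the smallest Lie subalgebra of the 2n×2n matrices containing g₁xg₁⁻¹, …, g_e x g_e⁻¹ contains the subalgebra 𝔫. -/
-- Preamble shared by the symplectic-Lie-algebra statements.
open Matrix

noncomputable section

attribute [local instance 100] LieRing.ofAssociativeRing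

/-- The matrix of the standard symplectic form: `[[0, Iₙ], [−Iₙ, 0]]`. -/
def spJ (k : Type*) [Field k] (n : ℕ) :
    Matrix (Fin n ⊕ Fin n) (Fin n ⊕ Fin n) k :=
  Matrix.fromBlocks 0 1 (-1) 0

/-- The symplectic Lie algebra `sp(2n,k) = {x : xᵀJ + Jx = 0}`, as a subset of the
matrix Lie algebra (with bracket `⁅x,y⁆ = x*y - y*x`). -/
def spSet (k : Type*) [Field k] (n : ℕ) :
    Set (Matrix (Fin n ⊕ Fin n) (Fin n ⊕ Fin n) k) :=
  {x | xᵀ * spJ k n + spJ k n * x = 0}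

/-- The symplectic group `Sp(2n,k) = {g : gᵀJg = J}`. -/
def SpGroup (k : Type*) [Field k] (n : ℕ) :
    Set (Matrix (Fin n ⊕ Fin n) (Fin n ⊕ Fin n) k) :=
  {g | gᵀ * spJ k n * g = spJ k n}

/-- The derived subalgebra `𝔪 = ⁅sp(2n,k), sp(2n,k)⁆`, i.e. the span of all brackets of
pairs of elements of `sp(2n,k)`. -/
def spm (k : Type*) [Field k] (n : ℕ) :
    Submodule k (Matrix (Fin n ⊕ Fin n) (Fin n ⊕ Fin n) k) :=
  Submodule.span k {m | ∃ x ∈ spSet k n, ∃ y ∈ spSet k n, m = x * y - y * x}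

/-- The second derived subalgebra `𝔫 = ⁅𝔪, 𝔪⁆`. -/
def spn (k : Type*) [Field k] (n : ℕ) :
    Submodule k (Matrix (Fin n ⊕ Fin n) (Fin n ⊕ Fin n) k) :=
  Submodule.span k {m | ∃ x ∈ spm k n, ∃ y ∈ spm k n, m = x * y - y * x}

/-- The center `{x ∈ sp(2n,k) : ⁅x,y⁆ = 0 for all y ∈ sp(2n,k)}`. -/
def spCenter (k : Type*) [Field k] (n : ℕ) :
    Set (Matrix (Fin n ⊕ Fin n) (Fin n ⊕ Fin n) k) :=
  {x ∈ spSet k n | ∀ y ∈ spSet k n, x * y - y * x = 0}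

namespace SP5
open Matrix
variable {k : Type*} [Field k] [CharP k 2] {n : ℕ}

/-- char 2 : negation is identity on matrices -/
lemma negM {a b : Type*} (M : Matrix a b k) : -M = M := by
  rw [← neg_one_smul k M, show (-1:k) = 1 from CharTwo.neg_eq 1, one_smul]

lemma addM {a b : Type*} (M : Matrix a b k) : M + M = 0 := by
  rw [← one_smul k M, ← add_smul, CharTwo.add_self_eq_zero (1:k), zero_smul]

lemma addV (v : Fin n ⊕ Fin n → k) : v + v = 0 := by
  funext i; exact CharTwo.add_self_eq_zero _

lemma Jt : (spJ k n)ᵀ = spJ k n := by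
  simp [spJ, fromBlocks_transpose, negM]

lemma JJ : spJ k n * spJ k n = 1 := by
  simp [spJ, fromBlocks_multiply, ← fromBlocks_one, negM]

lemma JmulVec (v : Fin n ⊕ Fin n → k) :
    spJ k n *ᵥ v = Sum.elim (fun i => v (Sum.inr i)) (fun i => v (Sum.inl i)) := by
  funext a
  cases a with
  | inl i =>
    simp [spJ, mulVec, dotProduct, Fintype.sum_sum_type, fromBlocks_apply₁₁, fromBlocks_apply₁₂,
      one_apply, ite_mul, Finset.sum_ite_eq]
  | inr i =>
    simp [spJ, mulVec, dotProduct, Fintype.sum_sum_type, fromBlocks_apply₂₁, fromBlocks_apply₂₂,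
      one_apply, neg_apply, CharTwo.neg_eq, ite_mul, Finset.sum_ite_eq]

/-- the symplectic pairing -/
def pr (u v : Fin n ⊕ Fin n → k) : k := u ⬝ᵥ (spJ k n *ᵥ v)

lemma pr_self (v : Fin n ⊕ Fin n → k) : pr v v = 0 := by
  rw [pr, JmulVec]
  simp only [dotProduct, Fintype.sum_sum_type, Sum.elim_inl, Sum.elim_inr]
  rw [← Finset.sum_add_distrib]
  apply Finset.sum_eq_zero
  intro i _
  rw [mul_comm]
  exact CharTwo.add_self_eq_zero _

lemma pr_symm (u v : Fin n ⊕ Fin n → k) : pr u v = pr v u := by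
  rw [pr, dotProduct_mulVec, ← Jt, vecMul_transpose, dotProduct_comm]; rfl

lemma Jones : spJ k n *ᵥ (fun _ => (1:k)) = fun _ => 1 := by
  rw [JmulVec]; funext a; cases a <;> simp

lemma Jentry (a b : Fin n ⊕ Fin n) : spJ k n a b = 0 ∨ spJ k n a b = 1 := by
  cases a <;> cases b <;> simp [spJ, one_apply, CharTwo.neg_eq] <;> tauto

-- vecMulVec algebra
lemma mul_vmv (M : Matrix (Fin n ⊕ Fin n) (Fin n ⊕ Fin n) k) (a b : Fin n ⊕ Fin n → k) :
    M * vecMulVec a b = vecMulVec (M *ᵥ a) b := by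
  ext i j
  simp only [mul_apply, vecMulVec_apply, mulVec, dotProduct, Finset.sum_mul]
  exact Finset.sum_congr rfl (fun l _ => by ring)

lemma vmv_mul (a b : Fin n ⊕ Fin n → k) (M : Matrix (Fin n ⊕ Fin n) (Fin n ⊕ Fin n) k) :
    vecMulVec a b * M = vecMulVec a (Mᵀ *ᵥ b) := by
  ext i j
  simp only [mul_apply, vecMulVec_apply, mulVec, dotProduct, transpose_apply, Finset.mul_sum]
  exact Finset.sum_congr rfl (fun l _ => by ring)

lemma vmv_vmv (a b c d : Fin n ⊕ Fin n → k) :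
    vecMulVec a b * vecMulVec c d = (b ⬝ᵥ c) • vecMulVec a d := by
  ext i j
  simp only [mul_apply, vecMulVec_apply, Matrix.smul_apply, dotProduct, smul_eq_mul, Finset.sum_mul]
  exact Finset.sum_congr rfl (fun l _ => by ring)

lemma vmv_t (a b : Fin n ⊕ Fin n → k) : (vecMulVec a b)ᵀ = vecMulVec b a := by
  ext i j; simp [vecMulVec_apply, mul_comm]

lemma vmv_mulVec (a b v : Fin n ⊕ Fin n → k) :
    vecMulVec a b *ᵥ v = (b ⬝ᵥ v) • a := by
  funext i
  simp only [mulVec, vecMulVec_apply, dotProduct, Pi.smul_apply, smul_eq_mul, Finset.mul_sum]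
  rw [Finset.sum_mul]
  exact Finset.sum_congr rfl (fun l _ => by ring)

lemma vmv_smul_right (a b : Fin n ⊕ Fin n → k) (c : k) :
    vecMulVec a (c • b) = c • vecMulVec a b := by
  ext i j; simp [vecMulVec_apply, Matrix.smul_apply]; ring

/-- rank-one element of sp -/
def eV (v : Fin n ⊕ Fin n → k) : Matrix (Fin n ⊕ Fin n) (Fin n ⊕ Fin n) k :=
  vecMulVec v v * spJ k n

/-- rank-two elements spanning the derived algebra -/
def fV (u v : Fin n ⊕ Fin n → k) : Matrix (Fin n ⊕ Fin n) (Fin n ⊕ Fin n) k :=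
  (vecMulVec u v + vecMulVec v u) * spJ k n

lemma eV_mul_eV (u w : Fin n ⊕ Fin n → k) :
    eV u * eV w = pr u w • (vecMulVec u w * spJ k n) := by
  rw [eV, eV, mul_assoc, ← mul_assoc (spJ k n), mul_vmv, ← mul_assoc, vmv_vmv, smul_mul_assoc, pr]

lemma bracket_eV (u w : Fin n ⊕ Fin n → k) :
    ⁅eV u, eV w⁆ = pr u w • fV u w := by
  rw [Ring.lie_def, eV_mul_eV, eV_mul_eV, pr_symm w u, sub_eq_add_neg, ← smul_neg, negM,
    ← smul_add, ← add_mul, fV]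

lemma bracket_eV' (u w : Fin n ⊕ Fin n → k) :
    eV u * eV w - eV w * eV u = pr u w • fV u w := by
  have h := bracket_eV (k := k) u w
  rwa [Ring.lie_def] at h

lemma eV_sq (u : Fin n ⊕ Fin n → k) : eV u * eV u = 0 := by
  rw [eV_mul_eV, pr_self, zero_smul]

/-- symplectic transvection -/
def Tv (u : Fin n ⊕ Fin n → k) (c : k) : Matrix (Fin n ⊕ Fin n) (Fin n ⊕ Fin n) k :=
  1 + c • eV u

lemma Tv_t (u : Fin n ⊕ Fin n → k) (c : k) :
    (Tv u c)ᵀ = 1 + c • (spJ k n * vecMulVec u u) := by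
  rw [Tv, transpose_add, transpose_one, transpose_smul, eV, transpose_mul, Jt, vmv_t]

lemma Tv_mul_Tv (u : Fin n ⊕ Fin n → k) (c : k) : Tv u c * Tv u c = 1 := by
  have h0 : (c • eV u) * (c • eV u) = 0 := by
    rw [smul_mul_smul_comm, eV_sq, smul_zero]
  have h : Tv u c * Tv u c = 1 + (c • eV u + c • eV u) + (c • eV u) * (c • eV u) := by
    rw [Tv]; noncomm_ring; module
  rw [h, h0, add_zero, addM, add_zero]

lemma Tv_mem (u : Fin n ⊕ Fin n → k) (c : k) : Tv u c ∈ SpGroup k n := by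
  have hBJ : (c • (spJ k n * vecMulVec u u)) * spJ k n = spJ k n * (c • eV u) := by
    rw [smul_mul_assoc, mul_smul_comm, eV, mul_assoc]
  have hEE : (c • eV u) * (c • eV u) = 0 := by
    rw [smul_mul_smul_comm, eV_sq, smul_zero]
  show (Tv u c)ᵀ * spJ k n * Tv u c = spJ k n
  rw [Tv_t, Tv]
  have h : (1 + c • (spJ k n * vecMulVec u u)) * spJ k n * (1 + c • eV u)
      = spJ k n + spJ k n * (c • eV u) + (c • (spJ k n * vecMulVec u u)) * spJ k n
        + (c • (spJ k n * vecMulVec u u)) * spJ k n * (c • eV u) := by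
    noncomm_ring; module
  rw [h, hBJ, mul_assoc, hEE, mul_zero, add_zero, add_assoc, ← mul_add, addM, mul_zero, add_zero]

lemma sp_mul_mem {g h : Matrix (Fin n ⊕ Fin n) (Fin n ⊕ Fin n) k}
    (hg : g ∈ SpGroup k n) (hh : h ∈ SpGroup k n) : g * h ∈ SpGroup k n := by
  show (g * h)ᵀ * spJ k n * (g * h) = spJ k n
  have h1 : (g * h)ᵀ * spJ k n * (g * h) = hᵀ * (gᵀ * spJ k n * g) * h := by
    rw [transpose_mul]; noncomm_ring
  rw [h1, hg]; exact hh

lemma TJ_eq_JT {T : Matrix (Fin n ⊕ Fin n) (Fin n ⊕ Fin n) k}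
    (hT : T ∈ SpGroup k n) (hT2 : T * T = 1) : Tᵀ * spJ k n = spJ k n * T := by
  have h : Tᵀ * spJ k n * T * T = spJ k n * T := by rw [hT]
  rwa [mul_assoc, hT2, mul_one] at h

lemma conj_eV {T : Matrix (Fin n ⊕ Fin n) (Fin n ⊕ Fin n) k}
    (hT : T ∈ SpGroup k n) (hT2 : T * T = 1) (v : Fin n ⊕ Fin n → k) :
    T * eV v * T = eV (T *ᵥ v) := by
  have h1 : eV (T *ᵥ v) = T * vecMulVec v v * Tᵀ * spJ k n := by
    have a1 : T * vecMulVec v v = vecMulVec (T *ᵥ v) v := mul_vmv _ _ _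
    have a2 : vecMulVec (T *ᵥ v) v * Tᵀ = vecMulVec (T *ᵥ v) (T *ᵥ v) := by
      rw [vmv_mul, transpose_transpose]
    rw [eV, ← a2, ← a1]
  rw [h1, mul_assoc (T * vecMulVec v v), TJ_eq_JT hT hT2, eV]
  noncomm_ring

lemma Tv_mulVec (u : Fin n ⊕ Fin n → k) (c : k) (v : Fin n ⊕ Fin n → k) :
    Tv u c *ᵥ v = v + (c * pr u v) • u := by
  rw [Tv, add_mulVec, one_mulVec, smul_mulVec, eV, ← mulVec_mulVec, vmv_mulVec, ← pr,
    smul_smul]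

lemma Tv_maps {v z : Fin n ⊕ Fin n → k} (h : pr v z ≠ 0) :
    Tv (v + z) (pr v z)⁻¹ *ᵥ v = z := by
  rw [Tv_mulVec]
  have hp : pr (v + z) v = pr v z := by
    rw [pr, add_dotProduct, ← pr, ← pr, pr_self, zero_add, pr_symm]
  rw [hp, inv_mul_cancel₀ h, one_smul, ← add_assoc, addV, zero_add]

/-- matrices `m` with `m·J` symmetric -/
def symS (k : Type*) [Field k] (n : ℕ) :
    Submodule k (Matrix (Fin n ⊕ Fin n) (Fin n ⊕ Fin n) k) where
  carrier := {m | (m * spJ k n)ᵀ = m * spJ k n}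
  add_mem' := by
    intro a b ha hb
    simp only [Set.mem_setOf_eq] at *
    rw [add_mul, transpose_add, ha, hb]
  zero_mem' := by simp
  smul_mem' := by
    intro c a ha
    simp only [Set.mem_setOf_eq] at *
    rw [smul_mul_assoc, transpose_smul, ha]

/-- matrices `m` with `m·J` alternating -/
def altS (k : Type*) [Field k] (n : ℕ) :
    Submodule k (Matrix (Fin n ⊕ Fin n) (Fin n ⊕ Fin n) k) where
  carrier := {m | (m * spJ k n)ᵀ = m * spJ k n ∧
    ∀ v, v ⬝ᵥ ((m * spJ k n) *ᵥ v) = 0}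
  add_mem' := by
    intro a b ha hb
    refine ⟨by rw [add_mul, transpose_add, ha.1, hb.1], fun v => ?_⟩
    rw [add_mul, add_mulVec, dotProduct_add, ha.2, hb.2, add_zero]
  zero_mem' := by simp
  smul_mem' := by
    intro c a ha
    refine ⟨by rw [smul_mul_assoc, transpose_smul, ha.1], fun v => ?_⟩
    rw [smul_mul_assoc, smul_mulVec, dotProduct_smul, ha.2, smul_zero]

lemma altS_le_symS : altS k n ≤ symS k n := fun _ hm => hm.1

lemma spSet_mem_symS {x : Matrix (Fin n ⊕ Fin n) (Fin n ⊕ Fin n) k}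
    (hx : x ∈ spSet k n) : x ∈ symS k n := by
  have h : xᵀ * spJ k n = spJ k n * x := by
    have h0 : xᵀ * spJ k n = -(spJ k n * x) := eq_neg_of_add_eq_zero_left hx
    rw [h0, negM]
  have h2 : xᵀ = spJ k n * x * spJ k n := by
    rw [← h, mul_assoc, JJ, mul_one]
  show (x * spJ k n)ᵀ = x * spJ k n
  rw [transpose_mul, Jt, h2, ← mul_assoc, ← mul_assoc, JJ, one_mul]

lemma self_eq_mulJJ (m : Matrix (Fin n ⊕ Fin n) (Fin n ⊕ Fin n) k) :
    m = (m * spJ k n) * spJ k n := by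
  rw [mul_assoc, JJ, mul_one]

lemma tASB {A B : Matrix (Fin n ⊕ Fin n) (Fin n ⊕ Fin n) k}
    (hAt : Aᵀ = A) (hBt : Bᵀ = B) : (A * spJ k n * B)ᵀ = B * spJ k n * A := by
  rw [transpose_mul, transpose_mul, Jt, hAt, hBt, mul_assoc]

lemma bracket_mem_altS {x y : Matrix (Fin n ⊕ Fin n) (Fin n ⊕ Fin n) k}
    (hx : x ∈ symS k n) (hy : y ∈ symS k n) : x * y - y * x ∈ altS k n := by
  obtain ⟨A, hA⟩ : ∃ A, x * spJ k n = A := ⟨_, rfl⟩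
  obtain ⟨B, hB⟩ : ∃ B, y * spJ k n = B := ⟨_, rfl⟩
  have hAt : Aᵀ = A := by rw [← hA]; exact hx
  have hBt : Bᵀ = B := by rw [← hB]; exact hy
  have hxy : (x * y - y * x) * spJ k n
      = A * spJ k n * B - B * spJ k n * A := by
    have e1 : x = A * spJ k n := by rw [← hA]; exact self_eq_mulJJ x
    have e2 : y = B * spJ k n := by rw [← hB]; exact self_eq_mulJJ y
    rw [sub_mul]
    congr 1
    · conv_lhs => rw [e1, e2]
      rw [mul_assoc (A * spJ k n), mul_assoc B, JJ, mul_one]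
    · conv_lhs => rw [e1, e2]
      rw [mul_assoc (B * spJ k n), mul_assoc A, JJ, mul_one]
  have hts1 : (A * spJ k n * B)ᵀ = B * spJ k n * A := tASB hAt hBt
  have hts2 : (B * spJ k n * A)ᵀ = A * spJ k n * B := tASB hBt hAt
  constructor
  · show ((x * y - y * x) * spJ k n)ᵀ = (x * y - y * x) * spJ k n
    rw [hxy, transpose_sub, hts1, hts2, ← neg_sub, negM]
  · intro v
    show v ⬝ᵥ (((x * y - y * x) * spJ k n) *ᵥ v) = 0
    rw [hxy, sub_mulVec, dotProduct_sub]
    have key : v ⬝ᵥ ((B * spJ k n * A) *ᵥ v) = v ⬝ᵥ ((A * spJ k n * B) *ᵥ v) := by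
      rw [dotProduct_mulVec, ← hts1, vecMul_transpose, dotProduct_comm]
    rw [key, sub_self]

lemma spm_le_altS : spm k n ≤ altS k n := by
  rw [spm, Submodule.span_le]
  rintro m ⟨x, hx, y, hy, rfl⟩
  exact bracket_mem_altS (spSet_mem_symS hx) (spSet_mem_symS hy)

lemma spn_le_altS : spn k n ≤ altS k n := by
  rw [spn, Submodule.span_le]
  rintro m ⟨x, hx, y, hy, rfl⟩
  exact bracket_mem_altS (altS_le_symS (spm_le_altS hx)) (altS_le_symS (spm_le_altS hy))

lemma Jv_ne_zero {v : Fin n ⊕ Fin n → k} (hv : v ≠ 0) : spJ k n *ᵥ v ≠ 0 := by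
  intro h
  apply hv
  have : spJ k n *ᵥ (spJ k n *ᵥ v) = 0 := by rw [h, mulVec_zero]
  rwa [mulVec_mulVec, JJ, one_mulVec] at this

lemma exists_pr_ne_zero {v : Fin n ⊕ Fin n → k} (hv : v ≠ 0) :
    ∃ a, pr v a ≠ 0 := by
  have h := Jv_ne_zero hv
  obtain ⟨j, hj⟩ := Function.ne_iff.mp h
  refine ⟨Pi.single j 1, ?_⟩
  rw [pr]
  have : v ⬝ᵥ (spJ k n *ᵥ Pi.single j 1) = (v ᵥ* spJ k n) j := by
    rw [dotProduct_mulVec, dotProduct_single, mul_one]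
  rw [this, ← Jt, vecMul_transpose]
  simpa using hj

lemma exists_z {v w : Fin n ⊕ Fin n → k} (hv : v ≠ 0) (hw : w ≠ 0) :
    ∃ z, pr v z ≠ 0 ∧ pr z w ≠ 0 := by
  obtain ⟨a, ha⟩ := exists_pr_ne_zero hv
  obtain ⟨b, hb⟩ := exists_pr_ne_zero hw
  by_cases h1 : pr w a ≠ 0
  · exact ⟨a, ha, by rwa [pr_symm]⟩
  by_cases h2 : pr v b ≠ 0
  · exact ⟨b, h2, by rwa [pr_symm] at hb⟩
  push_neg at h1 h2
  refine ⟨a + b, ?_, ?_⟩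
  · rw [pr, mulVec_add, dotProduct_add, ← pr, ← pr, h2, add_zero]; exact ha
  · rw [pr_symm, pr, mulVec_add, dotProduct_add, ← pr, ← pr, h1, zero_add]
    exact hb

lemma exists_g {v w : Fin n ⊕ Fin n → k} (hv : v ≠ 0) (hw : w ≠ 0) :
    ∃ g, g ∈ SpGroup k n ∧ g * eV v * g⁻¹ = eV w := by
  obtain ⟨z, hvz, hzw⟩ := exists_z hv hw
  have T1 := Tv (v + z) (pr v z)⁻¹
  set T₁ := Tv (v + z) (pr v z)⁻¹ with hT1
  set T₂ := Tv (z + w) (pr z w)⁻¹ with hT2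
  have m1 : T₁ ∈ SpGroup k n := Tv_mem _ _
  have m2 : T₂ ∈ SpGroup k n := Tv_mem _ _
  have s1 : T₁ * T₁ = 1 := Tv_mul_Tv _ _
  have s2 : T₂ * T₂ = 1 := Tv_mul_Tv _ _
  refine ⟨T₂ * T₁, sp_mul_mem m2 m1, ?_⟩
  have hinv : (T₂ * T₁)⁻¹ = T₁ * T₂ := by
    apply Matrix.inv_eq_right_inv
    have h3 : T₂ * T₁ * (T₁ * T₂) = T₂ * (T₁ * T₁) * T₂ := by noncomm_ring
    rw [h3, s1, mul_one, s2]
  rw [hinv]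
  have : T₂ * T₁ * eV v * (T₁ * T₂) = T₂ * (T₁ * eV v * T₁) * T₂ := by noncomm_ring
  rw [this, conj_eV m1 s1, conj_eV m2 s2, hT1, Tv_maps hvz, hT2, Tv_maps hzw]

lemma rank_one_decomp {x : Matrix (Fin n ⊕ Fin n) (Fin n ⊕ Fin n) k}
    (hx : x ∈ spSet k n) (hr : x.rank = 1) :
    ∃ c : k, ∃ v : Fin n ⊕ Fin n → k, c ≠ 0 ∧ v ≠ 0 ∧ x = c • eV v := by
  classical
  -- rank-one decomposition
  rw [Matrix.rank] at hr
  obtain ⟨vv, hvv0, hvall⟩ := finrank_eq_one_iff'.mp hr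
  set v0 : Fin n ⊕ Fin n → k := (vv : Fin n ⊕ Fin n → k) with hv0def
  have hv0 : v0 ≠ 0 := fun h => hvv0 (Subtype.ext h)
  have hcol : ∀ b, ∃ c : k, x *ᵥ Pi.single b 1 = c • v0 := by
    intro b
    have hmem : x *ᵥ Pi.single b 1 ∈ LinearMap.range x.mulVecLin :=
      ⟨Pi.single b 1, by rw [mulVecLin_apply]⟩
    obtain ⟨c, hc⟩ := hvall ⟨_, hmem⟩
    exact ⟨c, by simpa using congrArg Subtype.val hc.symm⟩
  choose w0 hw0 using hcol
  have hxvw : x = vecMulVec v0 w0 := by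
    ext a b
    have h1 : (x *ᵥ Pi.single b 1) a = x a b := by rw [mulVec_single]; simp
    have h2 := congrFun (hw0 b) a
    rw [h1] at h2
    rw [h2, vecMulVec_apply]
    simp [mul_comm]
  have hw0ne : w0 ≠ 0 := by
    intro h
    rw [h] at hxvw
    have : x = 0 := by
      rw [hxvw]; ext a b; simp [vecMulVec_apply]
    rw [this] at hr
    rw [Matrix.mulVecLin_zero, LinearMap.range_zero, finrank_bot] at hr
    exact zero_ne_one hr
  -- use the symplectic condition
  have hsym : xᵀ * spJ k n = spJ k n * x := by
    have h0 : xᵀ * spJ k n = -(spJ k n * x) := eq_neg_of_add_eq_zero_left hx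
    rw [h0, negM]
  set u0 : Fin n ⊕ Fin n → k := spJ k n *ᵥ v0 with hu0def
  have hu0 : u0 ≠ 0 := Jv_ne_zero hv0
  have hkey : vecMulVec w0 u0 = vecMulVec u0 w0 := by
    have e1 : xᵀ * spJ k n = vecMulVec w0 u0 := by
      rw [hxvw, vmv_t, vmv_mul, Jt]
    have e2 : spJ k n * x = vecMulVec u0 w0 := by
      rw [hxvw, mul_vmv]
    rw [← e1, ← e2, hsym]
  obtain ⟨j, hj⟩ := Function.ne_iff.mp hu0
  have hj' : u0 j ≠ 0 := by simpa using hj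
  set c : k := w0 j / u0 j with hcdef
  have hwc : ∀ a, w0 a = c * u0 a := by
    intro a
    have h := congrFun (congrFun hkey a) j
    rw [vecMulVec_apply, vecMulVec_apply] at h
    rw [hcdef, div_mul_eq_mul_div, eq_div_iff hj', h]
    exact mul_comm _ _
  have hcne : c ≠ 0 := by
    intro h
    apply hw0ne
    funext a
    rw [hwc a, h, zero_mul]; rfl
  refine ⟨c, v0, hcne, hv0, ?_⟩
  have : w0 = c • u0 := by funext a; rw [hwc a]; rfl
  rw [hxvw, this, vmv_smul_right, eV]
  congr 1
  rw [vmv_mul, Jt]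

lemma exists_t [Infinite k] (m : ℕ) : ∃ t : Fin m → k,
    (∀ i j, i ≠ j → t i ≠ t j) ∧ (∀ i j, t i + t j ≠ 1) ∧ (∀ i, t i ≠ 0) ∧ (∑ i, t i) ≠ 1 := by
  classical
  induction m with
  | zero =>
    refine ⟨fun i => i.elim0, fun i => i.elim0, fun i => i.elim0, fun i => i.elim0, ?_⟩
    simp only [Finset.univ_eq_empty, Finset.sum_empty]
    exact zero_ne_one
  | succ m ih =>
    obtain ⟨t, ht1, ht2, ht3, ht4⟩ := ih
    obtain ⟨α, hα⟩ := Infinite.exists_notMem_finset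
      ((Finset.univ.image t) ∪ (Finset.univ.image (fun i => 1 + t i)) ∪ {0, 1 + ∑ i, t i})
    simp only [Finset.mem_union, Finset.mem_image, Finset.mem_univ, true_and,
      Finset.mem_insert, Finset.mem_singleton, not_or, not_exists] at hα
    obtain ⟨⟨hα1, hα2⟩, hα3, hα4⟩ := hα
    have h2k : (2:k) = 0 := by
      have := CharP.cast_eq_zero k 2
      simpa using this
    refine ⟨Fin.snoc t α, ?_, ?_, ?_, ?_⟩
    · intro i j hij
      induction i using Fin.lastCases with
      | last =>
        induction j using Fin.lastCases with
        | last => exact absurd rfl hij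
        | cast j => rw [Fin.snoc_last, Fin.snoc_castSucc]; exact fun h => hα1 j h.symm
      | cast i =>
        induction j using Fin.lastCases with
        | last => rw [Fin.snoc_last, Fin.snoc_castSucc]; exact fun h => hα1 i h
        | cast j =>
          rw [Fin.snoc_castSucc, Fin.snoc_castSucc]
          exact ht1 i j (fun h => hij (by rw [h]))
    · intro i j
      induction i using Fin.lastCases with
      | last =>
        induction j using Fin.lastCases with
        | last =>
          rw [Fin.snoc_last, CharTwo.add_self_eq_zero]
          exact zero_ne_one
        | cast j =>
          rw [Fin.snoc_last, Fin.snoc_castSucc]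
          intro h
          apply hα2 j
          linear_combination -h + t j * h2k
      | cast i =>
        induction j using Fin.lastCases with
        | last =>
          rw [Fin.snoc_last, Fin.snoc_castSucc]
          intro h
          apply hα2 i
          linear_combination -h + t i * h2k
        | cast j =>
          rw [Fin.snoc_castSucc, Fin.snoc_castSucc]
          exact ht2 i j
    · intro i
      induction i using Fin.lastCases with
      | last => rw [Fin.snoc_last]; exact hα3
      | cast i => rw [Fin.snoc_castSucc]; exact ht3 i
    · rw [Fin.sum_univ_castSucc]
      simp only [Fin.snoc_castSucc, Fin.snoc_last]
      intro h
      apply hα4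
      linear_combination h - (∑ i : Fin m, t i) * h2k

/-- the vectors giving the generators -/
def Wv (s : Fin n ⊕ Fin n → k) (c : Fin n ⊕ Fin n) : Fin n ⊕ Fin n → k :=
  Pi.single c 1 + s c • (fun _ => (1:k))

lemma pr_single_single (a b : Fin n ⊕ Fin n) :
    pr (Pi.single a (1:k)) (Pi.single b 1) = spJ k n a b := by
  rw [pr, mulVec_single]
  simp [dotProduct, Pi.single_apply, Finset.sum_ite_eq]

lemma pr_single_ones (a : Fin n ⊕ Fin n) :
    pr (Pi.single a (1:k)) (fun _ => 1) = 1 := by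
  rw [pr, Jones]
  simp [dotProduct, Pi.single_apply, Finset.sum_ite_eq]

lemma pr_ones_ones : pr (n := n) (fun _ => (1:k)) (fun _ => (1:k)) = (0 : k) := by
  rw [pr, Jones]
  simp only [dotProduct, mul_one, Finset.sum_const, Finset.card_univ, Fintype.card_sum,
    Fintype.card_fin, nsmul_eq_mul, Nat.cast_add]
  exact CharTwo.add_self_eq_zero _

lemma pr_add_left (a b c : Fin n ⊕ Fin n → k) : pr (a + b) c = pr a c + pr b c := by
  rw [pr, add_dotProduct]; rfl

lemma pr_add_right (a b c : Fin n ⊕ Fin n → k) : pr a (b + c) = pr a b + pr a c := by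
  rw [pr, mulVec_add, dotProduct_add]; rfl

lemma pr_smul_left (t : k) (a b : Fin n ⊕ Fin n → k) : pr (t • a) b = t * pr a b := by
  rw [pr, smul_dotProduct]; rfl

lemma pr_smul_right (t : k) (a b : Fin n ⊕ Fin n → k) : pr a (t • b) = t * pr a b := by
  rw [pr, mulVec_smul, dotProduct_smul]; rfl

lemma pr_Wv (s : Fin n ⊕ Fin n → k) (c c' : Fin n ⊕ Fin n) :
    pr (Wv s c) (Wv s c') = spJ k n c c' + s c + s c' := by
  rw [Wv, Wv, pr_add_left, pr_add_right, pr_add_right, pr_smul_left, pr_smul_left,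
    pr_smul_right, pr_smul_right, pr_single_single, pr_single_ones, pr_ones_ones,
    pr_symm (fun _ => (1:k)) (Pi.single c' 1), pr_single_ones]
  ring

lemma pr_Wv_ne (s : Fin n ⊕ Fin n → k) (hs1 : ∀ c c', c ≠ c' → s c ≠ s c')
    (hs2 : ∀ c c', s c + s c' ≠ 1) {c c' : Fin n ⊕ Fin n} (hne : c ≠ c') :
    pr (Wv s c) (Wv s c') ≠ 0 := by
  rw [pr_Wv]
  rcases Jentry (k := k) c c' with h | h <;> rw [h]
  · rw [zero_add]
    intro hz
    have : s c = s c' := by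
      have h2 := CharTwo.add_self_eq_zero (s c')
      have : s c + s c' + s c' = s c' := by rw [hz, zero_add]
      rwa [add_assoc, h2, add_zero] at this
    exact hs1 c c' hne this
  · intro hz
    apply hs2 c c'
    have h2 := congrArg (fun z => (1:k) + z) hz
    simp only [add_zero] at h2
    rw [← add_assoc, ← add_assoc, CharTwo.add_self_eq_zero, zero_add] at h2
    exact h2

lemma Wv_ne_zero (hn : 0 < n) (s : Fin n ⊕ Fin n → k) (hs0 : ∀ c, s c ≠ 0)
    (c : Fin n ⊕ Fin n) : Wv s c ≠ 0 := by
  have : ∃ d : Fin n ⊕ Fin n, d ≠ c := by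
    cases c with
    | inl a => exact ⟨Sum.inr ⟨0, hn⟩, by simp⟩
    | inr a => exact ⟨Sum.inl ⟨0, hn⟩, by simp⟩
  obtain ⟨d, hd⟩ := this
  intro h
  have h2 := congrFun h d
  rw [Wv] at h2
  simp only [Pi.add_apply, Pi.smul_apply, smul_eq_mul, mul_one, Pi.zero_apply] at h2
  rw [Pi.single_eq_of_ne hd, zero_add] at h2
  exact hs0 c h2

lemma unip_mul {A : Matrix (Fin n ⊕ Fin n) (Fin n ⊕ Fin n) k} {σ : k}
    (hAA : A * A = σ • A) (a b : k) :
    (1 + a • A) * (1 + b • A) = 1 + (a + b + a * b * σ) • A := by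
  have h1 : (1 + a • A) * (1 + b • A) = 1 + a • A + b • A + (a • A) * (b • A) := by
    noncomm_ring
    module
  rw [h1, smul_mul_smul_comm, hAA, smul_smul]
  module

lemma span_decomp (s : Fin n ⊕ Fin n → k)
    (hsum : (∑ c, s c) ≠ 1)
    {m : Matrix (Fin n ⊕ Fin n) (Fin n ⊕ Fin n) k} (hm : m ∈ altS k n) :
    ∃ coef : (Fin n ⊕ Fin n) → (Fin n ⊕ Fin n) → k,
      (∀ c c', coef c c' ≠ 0 → c ≠ c') ∧
      m = ∑ c : Fin n ⊕ Fin n, ∑ c' : Fin n ⊕ Fin n,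
        coef c c' • fV (Wv s c) (Wv s c') := by
  classical
  obtain ⟨hSt0, hq0⟩ := hm
  obtain ⟨S, hS⟩ : ∃ S, S = m * spJ k n := ⟨_, rfl⟩
  have hSt : Sᵀ = S := by rw [hS]; exact hSt0
  have hq : ∀ v, v ⬝ᵥ (S *ᵥ v) = 0 := by rw [hS]; exact hq0
  obtain ⟨A, hA⟩ : ∃ A, A = vecMulVec (fun _ => (1:k)) s := ⟨_, rfl⟩
  obtain ⟨σ, hσ⟩ : ∃ σ : k, σ = ∑ c, s c := ⟨_, rfl⟩
  have hAA : A * A = σ • A := by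
    rw [hA]
    exact (vmv_vmv _ _ _ _).trans (by rw [hσ]; congr 1; simp [dotProduct])
  have h1σ : (1:k) + σ ≠ 0 := by
    intro h
    apply hsum
    rw [← hσ]
    have h2 := congrArg (fun z => (1:k) + z) h
    simp only [add_zero] at h2
    rw [← add_assoc, CharTwo.add_self_eq_zero, zero_add] at h2
    exact h2
  obtain ⟨μ, hμ⟩ : ∃ μ : k, μ = ((1:k) + σ)⁻¹ := ⟨_, rfl⟩
  obtain ⟨P, hP⟩ : ∃ P, P = 1 + (1:k) • A := ⟨_, rfl⟩
  obtain ⟨R, hR⟩ : ∃ R, R = 1 + μ • A := ⟨_, rfl⟩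
  have h2k : (2:k) = 0 := by
    have := CharP.cast_eq_zero k 2
    simpa using this
  have hμσ : μ * ((1:k) + σ) = 1 := by rw [hμ]; exact inv_mul_cancel₀ h1σ
  have hc1 : (1:k) + μ + 1 * μ * σ = 0 := by linear_combination hμσ + h2k
  have hc2 : μ + (1:k) + μ * 1 * σ = 0 := by linear_combination hμσ + h2k
  have hPR : P * R = 1 := by
    rw [hP, hR, unip_mul hAA 1 μ, hc1, zero_smul, add_zero]
  have hRP : R * P = 1 := by
    rw [hP, hR, unip_mul hAA μ 1, hc2, zero_smul, add_zero]
  obtain ⟨S', hS'⟩ : ∃ S', S' = R * S * Rᵀ := ⟨_, rfl⟩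
  have hS't : S'ᵀ = S' := by
    rw [hS', transpose_mul, transpose_transpose, transpose_mul, hSt, ← mul_assoc]
  have hq' : ∀ v, v ⬝ᵥ (S' *ᵥ v) = 0 := by
    intro v
    have hv1 : v ᵥ* R = Rᵀ *ᵥ v := by
      conv_lhs => rw [← transpose_transpose R]
      rw [vecMul_transpose]
    rw [hS', ← mulVec_mulVec, ← mulVec_mulVec, dotProduct_mulVec, hv1]
    exact hq _
  have hdiag : ∀ c, S' c c = 0 := by
    intro c
    have h := hq' (Pi.single c 1)
    rw [mulVec_single] at h
    simpa [dotProduct, Pi.single_apply, Finset.sum_ite_eq] using h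
  have hsym' : ∀ c c', S' c' c = S' c c' := by
    intro c c'
    have h := congrFun (congrFun hS't c) c'
    rwa [transpose_apply] at h
  have hPSP : P * S' * Pᵀ = S := by
    have e : P * (R * S * Rᵀ) * Pᵀ = (P * R) * S * (Rᵀ * Pᵀ) := by noncomm_ring
    rw [hS', e, hPR, ← transpose_mul, hPR, transpose_one, one_mul, mul_one]
  have hPapp : ∀ a c, P a c = Wv s c a := by
    intro a c
    rw [hP, hA, Wv]
    simp only [Matrix.add_apply, one_apply, Matrix.smul_apply, vecMulVec_apply, smul_eq_mul, one_mul,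
      Pi.add_apply, Pi.smul_apply, Pi.single_apply, mul_one]
  have hsum1 : (∑ c : Fin n ⊕ Fin n, ∑ c' : Fin n ⊕ Fin n,
      S' c c' • vecMulVec (Wv s c) (Wv s c')) = P * S' * Pᵀ := by
    ext a b
    have hR1 : (P * S' * Pᵀ) a b = ∑ j : Fin n ⊕ Fin n, ∑ c : Fin n ⊕ Fin n,
        P a c * S' c j * P b j := by
      simp only [mul_apply, transpose_apply, Finset.sum_mul]
    have hR2 : (∑ j : Fin n ⊕ Fin n, ∑ c : Fin n ⊕ Fin n, P a c * S' c j * P b j)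
        = ∑ c : Fin n ⊕ Fin n, ∑ j : Fin n ⊕ Fin n, P a c * S' c j * P b j :=
      Finset.sum_comm
    rw [hR1, hR2]
    simp only [Matrix.sum_apply, Matrix.smul_apply, vecMulVec_apply, smul_eq_mul]
    exact Finset.sum_congr rfl fun c _ => Finset.sum_congr rfl fun j _ => by
      rw [hPapp a c, hPapp b j]; ring
  obtain ⟨r, hr⟩ : ∃ r : Fin n ⊕ Fin n → ℕ, r = fun c => ((Fintype.equivFin _) c : ℕ) :=
    ⟨_, rfl⟩
  have hrinj : Function.Injective r := by
    rw [hr]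
    intro a b h
    exact (Fintype.equivFin _).injective (Fin.val_injective h)
  obtain ⟨H, hH⟩ : ∃ H : Fin n ⊕ Fin n → Fin n ⊕ Fin n → k,
      H = fun c c' => if r c < r c' then 1 else 0 := ⟨_, rfl⟩
  have hHco : ∀ c c', H c c' * S' c c' + H c' c * S' c' c = S' c c' := by
    intro c c'
    by_cases hcc : c = c'
    · subst hcc
      rw [hH]
      simp [lt_irrefl, hdiag c]
    · rcases lt_trichotomy (r c) (r c') with h | h | h
      · rw [hH]
        simp only [if_pos h, if_neg (not_lt.mpr (le_of_lt h)), one_mul, zero_mul, add_zero]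
      · exact absurd (hrinj h) hcc
      · rw [hH]
        simp only [if_pos h, if_neg (not_lt.mpr (le_of_lt h)), one_mul, zero_mul, zero_add]
        exact hsym' c c'
  refine ⟨fun c c' => H c c' * S' c c', ?_, ?_⟩
  · intro c c' hne
    rintro rfl
    apply hne
    rw [hH]
    simp [lt_irrefl]
  · have hval : (∑ c : Fin n ⊕ Fin n, ∑ c' : Fin n ⊕ Fin n, (H c c' * S' c c') •
        (vecMulVec (Wv s c) (Wv s c') + vecMulVec (Wv s c') (Wv s c)))
        = ∑ c : Fin n ⊕ Fin n, ∑ c' : Fin n ⊕ Fin n,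
          S' c c' • vecMulVec (Wv s c) (Wv s c') := by
      have e1 : ∀ c c' : Fin n ⊕ Fin n, (H c c' * S' c c') •
          (vecMulVec (Wv s c) (Wv s c') + vecMulVec (Wv s c') (Wv s c))
          = (H c c' * S' c c') • vecMulVec (Wv s c) (Wv s c')
            + (H c c' * S' c c') • vecMulVec (Wv s c') (Wv s c) := fun c c' => smul_add _ _ _
      simp only [e1, Finset.sum_add_distrib]
      have e2 : (∑ c : Fin n ⊕ Fin n, ∑ c' : Fin n ⊕ Fin n,
          (H c c' * S' c c') • vecMulVec (Wv s c') (Wv s c))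
          = ∑ c : Fin n ⊕ Fin n, ∑ c' : Fin n ⊕ Fin n,
          (H c' c * S' c' c) • vecMulVec (Wv s c) (Wv s c') := Finset.sum_comm
      rw [e2, ← Finset.sum_add_distrib]
      refine Finset.sum_congr rfl fun c _ => ?_
      rw [← Finset.sum_add_distrib]
      refine Finset.sum_congr rfl fun c' _ => ?_
      rw [← add_smul, hHco]
    have hmS : m = S * spJ k n := by rw [hS]; exact self_eq_mulJJ m
    rw [hmS, ← hPSP, ← hsum1, ← hval, Finset.sum_mul]
    refine Finset.sum_congr rfl fun c _ => ?_
    rw [Finset.sum_mul]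
    refine Finset.sum_congr rfl fun c' _ => ?_
    rw [fV, smul_mul_assoc]

end SP5


/-- Let `k` be algebraically closed of characteristic 2, `n ≥ 3`, and let
`x ∈ sp(2n,k)` satisfy `x·x = 0` and `rank x = 1`. With `e = max(8, 2n)`, there exist
`g₁, …, g_e ∈ Sp(2n,k)` such that the smallest Lie subalgebra containing the conjugates
`gᵢ x gᵢ⁻¹` contains `𝔫`. -/
theorem stmt5 (k : Type*) [Field k] [IsAlgClosed k] [CharP k 2] (n : ℕ) (hn : 3 ≤ n)
    (x : Matrix (Fin n ⊕ Fin n) (Fin n ⊕ Fin n) k)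
    (hx : x ∈ spSet k n) (hx2 : x * x = 0) (hrank : x.rank = 1) :
    ∃ g : Fin (max 8 (2 * n)) → Matrix (Fin n ⊕ Fin n) (Fin n ⊕ Fin n) k,
      (∀ i, g i ∈ SpGroup k n) ∧
      (spn k n : Set (Matrix (Fin n ⊕ Fin n) (Fin n ⊕ Fin n) k)) ⊆
        (LieSubalgebra.lieSpan k (Matrix (Fin n ⊕ Fin n) (Fin n ⊕ Fin n) k)
          {y | ∃ i, y = g i * x * (g i)⁻¹} :
            Set (Matrix (Fin n ⊕ Fin n) (Fin n ⊕ Fin n) k)) := by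
  classical
  have hn0 : 0 < n := by omega
  obtain ⟨c₀, v0, hc₀, hv0, hxe⟩ := SP5.rank_one_decomp hx hrank
  obtain ⟨t, ht1, ht2, ht3, ht4⟩ := SP5.exists_t (k := k) (Fintype.card (Fin n ⊕ Fin n))
  obtain ⟨s, hsdef⟩ : ∃ s : Fin n ⊕ Fin n → k,
      s = fun c => t (Fintype.equivFin (Fin n ⊕ Fin n) c) := ⟨_, rfl⟩
  have hs1 : ∀ c c', c ≠ c' → s c ≠ s c' := by
    intro c c' h
    rw [hsdef]
    exact ht1 _ _ (fun he => h ((Fintype.equivFin _).injective he))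
  have hs0 : ∀ c, s c ≠ 0 := by intro c; rw [hsdef]; exact ht3 _
  have hs2 : ∀ c c', s c + s c' ≠ 1 := by intro c c'; rw [hsdef]; exact ht2 _ _
  have hssum : (∑ c, s c) ≠ 1 := by
    rw [hsdef, Equiv.sum_comp (Fintype.equivFin (Fin n ⊕ Fin n)) t]
    exact ht4
  have hW : ∀ c, SP5.Wv s c ≠ 0 := SP5.Wv_ne_zero hn0 s hs0
  have hg : ∀ c, ∃ g, g ∈ SpGroup k n ∧ g * x * g⁻¹ = c₀ • SP5.eV (SP5.Wv s c) := by
    intro c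
    obtain ⟨g, hgSp, hgc⟩ := SP5.exists_g hv0 (hW c)
    refine ⟨g, hgSp, ?_⟩
    rw [hxe, mul_smul_comm, smul_mul_assoc, hgc]
  choose gC hgC1 hgC2 using hg
  have hcard : Fintype.card (Fin n ⊕ Fin n) ≤ max 8 (2*n) := by
    simp only [Fintype.card_sum, Fintype.card_fin]
    omega
  obtain ⟨p, hp⟩ : ∃ p : Fin (max 8 (2*n)) → Fin n ⊕ Fin n,
      p = fun i : Fin (max 8 (2*n)) => if h : (i : ℕ) < Fintype.card (Fin n ⊕ Fin n)
        then (Fintype.equivFin (Fin n ⊕ Fin n)).symm ⟨i, h⟩ else Sum.inl ⟨0, hn0⟩ := ⟨_, rfl⟩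
  have hpsurj : ∀ c, ∃ i, p i = c := by
    intro c
    refine ⟨⟨((Fintype.equivFin (Fin n ⊕ Fin n)) c : ℕ),
      lt_of_lt_of_le (Fin.is_lt _) hcard⟩, ?_⟩
    rw [hp]
    simp only [Fin.is_lt, dif_pos, Fin.eta, Equiv.symm_apply_apply]
  refine ⟨fun i => gC (p i), fun i => hgC1 (p i), ?_⟩
  intro m hm
  have hmAlt : m ∈ SP5.altS k n := SP5.spn_le_altS hm
  obtain ⟨coef, hcne, hmeq⟩ := SP5.span_decomp s hssum hmAlt
  have hyL : ∀ c, c₀ • SP5.eV (SP5.Wv s c) ∈ LieSubalgebra.lieSpan k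
      (Matrix (Fin n ⊕ Fin n) (Fin n ⊕ Fin n) k)
      {y | ∃ i, y = gC (p i) * x * (gC (p i))⁻¹} := by
    intro c
    obtain ⟨i, hi⟩ := hpsurj c
    apply LieSubalgebra.subset_lieSpan
    exact ⟨i, by rw [hi, hgC2 c]⟩
  have hfL : ∀ c c', c ≠ c' → SP5.fV (SP5.Wv s c) (SP5.Wv s c') ∈ LieSubalgebra.lieSpan k
      (Matrix (Fin n ⊕ Fin n) (Fin n ⊕ Fin n) k)
      {y | ∃ i, y = gC (p i) * x * (gC (p i))⁻¹} := by
    intro c c' hne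
    have hb := LieSubalgebra.lie_mem _ (hyL c) (hyL c')
    have hprne : SP5.pr (SP5.Wv s c) (SP5.Wv s c') ≠ 0 := SP5.pr_Wv_ne s hs1 hs2 hne
    have heq : ⁅c₀ • SP5.eV (SP5.Wv s c), c₀ • SP5.eV (SP5.Wv s c')⁆
        = (c₀ * (c₀ * SP5.pr (SP5.Wv s c) (SP5.Wv s c'))) • SP5.fV (SP5.Wv s c) (SP5.Wv s c') := by
      rw [Ring.lie_def, smul_mul_smul_comm, smul_mul_smul_comm, mul_comm c₀ c₀,
        ← smul_sub, SP5.bracket_eV', smul_smul, mul_assoc]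
    have hqne : c₀ * (c₀ * SP5.pr (SP5.Wv s c) (SP5.Wv s c')) ≠ 0 :=
      mul_ne_zero hc₀ (mul_ne_zero hc₀ hprne)
    have hfe : SP5.fV (SP5.Wv s c) (SP5.Wv s c')
        = (c₀ * (c₀ * SP5.pr (SP5.Wv s c) (SP5.Wv s c')))⁻¹ •
          ⁅c₀ • SP5.eV (SP5.Wv s c), c₀ • SP5.eV (SP5.Wv s c')⁆ := by
      rw [heq, smul_smul, inv_mul_cancel₀ hqne, one_smul]
    rw [hfe]
    exact (LieSubalgebra.lieSpan k _ _).smul_mem _ hb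
  show m ∈ (LieSubalgebra.lieSpan k (Matrix (Fin n ⊕ Fin n) (Fin n ⊕ Fin n) k)
    {y | ∃ i, y = gC (p i) * x * (gC (p i))⁻¹} : Set _)
  rw [SetLike.mem_coe, hmeq]
  refine sum_mem fun c _ => sum_mem fun c' _ => ?_
  by_cases h : coef c c' = 0
  · rw [h, zero_smul]
    exact zero_mem _
  · exact (LieSubalgebra.lieSpan k _ _).smul_mem _ (hfL c c' (hcne c c' h))
end
end

section
/- Let k be a field of characteristic 2, V a finite-dimensional k-vector space of dimension 2n, B a nondegenerate alternating bilinear form on V, and W ⊆ V a totally isotropic subspace of dimension r. Let C be the set of linear maps y : V → V such that B(yv, w) = B(v, yw) for all v, w ∈ V and range y ⊆ W. Then C is a k-linear subspace of End(V) of dimension r(r+1)/2, and every y ∈ C satisfies y ∘ y = 0 and W^⊥ ⊆ ker y. -/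
/-- Let `k` have characteristic 2, `V` a `2n`-dimensional `k`-vector space with a
nondegenerate alternating bilinear form `B`, and `W ⊆ V` a totally isotropic subspace of
dimension `r`. Let `C` be the set of linear maps `y : V → V` that are self-adjoint for
`B` and have `range y ⊆ W`. Then `C` is a `k`-linear subspace of `End(V)` of dimension
`r(r+1)/2`, and every `y ∈ C` satisfies `y ∘ y = 0` and `W^⊥ ⊆ ker y`. -/
theorem stmt12 (k V : Type*) [Field k] [CharP k 2] [AddCommGroup V] [Module k V]
    [FiniteDimensional k V] (n : ℕ)
    (hdim : Module.finrank k V = 2 * n)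
    (B : V →ₗ[k] V →ₗ[k] k)
    (halt : ∀ v : V, B v v = 0)
    (hnd1 : ∀ v : V, (∀ w : V, B v w = 0) → v = 0)
    (hnd2 : ∀ w : V, (∀ v : V, B v w = 0) → w = 0)
    (W : Submodule k V) (r : ℕ) (hr : Module.finrank k W = r)
    (hW : ∀ w ∈ W, ∀ w' ∈ W, B w w' = 0)
    (C : Set (V →ₗ[k] V))
    (hC : C = {y : V →ₗ[k] V |
      (∀ v w : V, B (y v) w = B v (y w)) ∧ LinearMap.range y ≤ W}) :
    (∃ S : Submodule k (V →ₗ[k] V), (S : Set (V →ₗ[k] V)) = C ∧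
      Module.finrank k S = r * (r + 1) / 2) ∧
    (∀ y ∈ C, y ∘ₗ y = 0 ∧ ∀ v : V, (∀ u ∈ W, B u v = 0) → y v = 0) := by
  classical
  subst hC
  -- In characteristic 2, an alternating form is symmetric.
  have hsymm : ∀ v w : V, B v w = B w v := by
    intro v w
    have h := halt (v + w)
    simp only [map_add, LinearMap.add_apply, halt, zero_add, add_zero] at h
    rw [eq_neg_of_add_eq_zero_left h, CharTwo.neg_eq]
  -- Every self-adjoint map with range in `W` kills the orthogonal of `W`.
  have hker : ∀ y : V →ₗ[k] V, (∀ a b : V, B (y a) b = B a (y b)) →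
      LinearMap.range y ≤ W → ∀ x : V, (∀ u ∈ W, B u x = 0) → y x = 0 := by
    intro y hy hyW x hx
    apply hnd1
    intro z
    rw [hy, hsymm]
    exact hx _ (hyW (LinearMap.mem_range_self y z))
  -- The second assertion.
  have part2 : ∀ y ∈ {y : V →ₗ[k] V |
      (∀ v w : V, B (y v) w = B v (y w)) ∧ LinearMap.range y ≤ W},
      y ∘ₗ y = 0 ∧ ∀ v : V, (∀ u ∈ W, B u v = 0) → y v = 0 := by
    intro y hy
    obtain ⟨hy1, hy2⟩ := hy
    refine ⟨?_, hker y hy1 hy2⟩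
    apply LinearMap.ext
    intro x
    simp only [LinearMap.comp_apply, LinearMap.zero_apply]
    exact hker y hy1 hy2 (y x)
      (fun u hu => hW u hu (y x) (hy2 (LinearMap.mem_range_self y x)))
  refine ⟨?_, part2⟩
  -- `B`, seen as a map to the dual, is bijective.
  have hBsurj : Function.Surjective (B : V →ₗ[k] Module.Dual k V) := by
    have hinj : Function.Injective (B : V →ₗ[k] Module.Dual k V) :=
      (injective_iff_map_eq_zero (B : V →ₗ[k] Module.Dual k V)).mpr
        (fun v hv => hnd1 v (fun w => by rw [hv]; rfl))
    exact (LinearMap.injective_iff_surjective_of_finrank_eq_finrank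
      (Subspace.dual_finrank_eq).symm).mp hinj
  -- A basis of `W` and a dual family in `V`.
  set wb : Module.Basis (Fin r) k W := Module.finBasisOfFinrankEq k W hr with hwb
  obtain ⟨W', hcompl⟩ := Submodule.exists_isCompl W
  have hvex : ∀ j : Fin r, ∃ vj : V, B vj
      = (wb.coord j) ∘ₗ (W.projectionOnto W' hcompl) := fun j => hBsurj _
  choose v hv using hvex
  have hvw : ∀ i j : Fin r, B (v j) ((wb i : V)) = if i = j then 1 else 0 := by
    intro i j
    rw [hv j]
    simp [Submodule.projectionOnto_apply_left, Module.Basis.coord_apply,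
      Module.Basis.repr_self, Finsupp.single_apply]
  have hwv : ∀ i j : Fin r, B ((wb i : V)) (v j) = if i = j then 1 else 0 :=
    fun i j => (hsymm _ _).trans (hvw i j)
  -- For any `x`, the remainder `x - ∑ B(wᵢ, x) vᵢ` is orthogonal to `W`.
  have hdecomp : ∀ x : V, ∀ u ∈ W, B u (x - ∑ i, B ((wb i : V)) x • v i) = 0 := by
    intro x u hu
    have hwz : ∀ j : Fin r, B ((wb j : V)) (x - ∑ i, B ((wb i : V)) x • v i) = 0 := by
      intro j
      simp only [map_sub, map_sum, map_smul, smul_eq_mul, hwv, mul_ite, mul_one, mul_zero,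
        Finset.sum_ite_eq, Finset.mem_univ, if_true]
      ring
    have h0 := congrArg (W.subtype) (wb.sum_repr ⟨u, hu⟩)
    simp only [map_sum, map_smul, Submodule.subtype_apply] at h0
    rw [← h0]
    simp only [map_sum, LinearMap.sum_apply, map_smul, LinearMap.smul_apply, hwz,
      smul_zero, Finset.sum_const_zero]
  -- Every element of `W` is recovered from its pairings with the `vᵢ`.
  have hWrepr : ∀ z, z ∈ W → z = ∑ i, B z (v i) • ((wb i : V)) := by
    intro z hz
    have h0 := congrArg (W.subtype) (wb.sum_repr ⟨z, hz⟩)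
    simp only [map_sum, map_smul, Submodule.subtype_apply] at h0
    have hcoef : ∀ j, B z (v j) = wb.repr ⟨z, hz⟩ j := by
      intro j
      conv_lhs => rw [← h0]
      simp only [map_sum, LinearMap.sum_apply, map_smul, LinearMap.smul_apply, hwv,
        smul_eq_mul, mul_ite, mul_one, mul_zero, Finset.sum_ite_eq', Finset.mem_univ, if_true]
    conv_lhs => rw [← h0]
    exact Finset.sum_congr rfl fun i _ => by rw [hcoef i]
  -- The set `C` as a submodule.
  set S : Submodule k (V →ₗ[k] V) :=
    { carrier := {y : V →ₗ[k] V |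
        (∀ a b : V, B (y a) b = B a (y b)) ∧ LinearMap.range y ≤ W}
      add_mem' := by
        rintro y z ⟨hy1, hy2⟩ ⟨hz1, hz2⟩
        refine ⟨fun a b => by simp [hy1 a b, hz1 a b], ?_⟩
        rintro _ ⟨u, rfl⟩
        exact W.add_mem (hy2 ⟨u, rfl⟩) (hz2 ⟨u, rfl⟩)
      zero_mem' := ⟨fun a b => by simp, by rintro _ ⟨u, rfl⟩; simp [W.zero_mem]⟩
      smul_mem' := by
        rintro c y ⟨hy1, hy2⟩
        refine ⟨fun a b => by simp [hy1 a b], ?_⟩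
        rintro _ ⟨u, rfl⟩
        exact W.smul_mem c (hy2 ⟨u, rfl⟩) } with hS
  refine ⟨S, rfl, ?_⟩
  -- The linear map from symmetric data (indexed by `Sym2 (Fin r)`) to endomorphisms.
  set L : (Sym2 (Fin r) → k) →ₗ[k] (V →ₗ[k] V) :=
    { toFun := fun g => ∑ i, ∑ j, g s(i, j) • (B.flip (wb j : V)).smulRight (wb i : V)
      map_add' := by
        intro g h
        simp [add_smul, Finset.sum_add_distrib]
      map_smul' := by
        intro c g
        simp [smul_smul, Finset.smul_sum] } with hL
  have hLapp : ∀ g x, L g x = ∑ i, ∑ j, (g s(i, j) * B x (wb j : V)) • ((wb i : V)) := by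
    intro g x
    simp [hL, LinearMap.sum_apply, LinearMap.smul_apply, LinearMap.smulRight_apply,
      LinearMap.flip_apply, smul_smul]
  have hBL : ∀ g x x', B (L g x) x'
      = ∑ i, ∑ j, g s(i, j) * B x (wb j : V) * B ((wb i : V)) x' := by
    intro g x x'
    rw [hLapp]
    simp [LinearMap.sum_apply, LinearMap.smul_apply, smul_eq_mul, map_sum, map_smul]
  -- The range of `L` is contained in `S`.
  have hLmem : ∀ g, L g ∈ S := by
    intro g
    constructor
    · intro a b
      rw [hBL]
      have hb : B a (L g b) = ∑ i, ∑ j, g s(i, j) * B b (wb j : V) * B a ((wb i : V)) := by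
        rw [hLapp, map_sum]
        simp [map_smul, smul_eq_mul]
      rw [hb, Finset.sum_comm]
      refine Finset.sum_congr rfl fun i _ => Finset.sum_congr rfl fun j _ => ?_
      rw [show s(j, i) = s(i, j) from Sym2.eq_swap, hsymm (wb j : V) b, hsymm a (wb i : V)]
      ring
    · rintro _ ⟨u, rfl⟩
      rw [hLapp]
      exact Submodule.sum_mem _ fun i _ => Submodule.sum_mem _ fun j _ =>
        W.smul_mem _ (wb i).2
  -- `L` is injective.
  have hLinj : Function.Injective L := by
    rw [injective_iff_map_eq_zero]
    intro g hg
    funext s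
    induction s using Sym2.ind with
    | _ a b =>
      have h := congrArg (fun y : V →ₗ[k] V => B (y (v a)) (v b)) hg
      simp only [LinearMap.zero_apply, map_zero] at h
      rw [hBL] at h
      have inner : ∀ i, (∑ j, g s(i, j) * B (v a) ((wb j : V)) * B ((wb i : V)) (v b))
          = (if i = b then g s(i, a) else 0) := by
        intro i
        simp only [hvw, hwv, mul_ite, mul_one, mul_zero, ite_mul, zero_mul]
        by_cases hib : i = b <;> simp [hib, Finset.sum_ite_eq']
      simp only [inner, Finset.sum_ite_eq', Finset.mem_univ, if_true] at h
      rw [show s(a, b) = s(b, a) from Sym2.eq_swap]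
      simpa using h
  -- `L` maps onto `S`.
  have hLsurj : ∀ y ∈ S, ∃ g, L g = y := by
    intro y hy
    obtain ⟨hy1, hy2⟩ := hy
    have hsym2 : ∀ a b : Fin r, B (y (v a)) (v b) = B (y (v b)) (v a) := by
      intro a b
      rw [hy1 (v a) (v b), hsymm]
    refine ⟨Sym2.lift ⟨fun a b => B (y (v a)) (v b), hsym2⟩, ?_⟩
    apply LinearMap.ext
    intro x
    have hx0 : y (x - ∑ i, B ((wb i : V)) x • v i) = 0 := hker y hy1 hy2 _ (hdecomp x)
    have hx0' : L (Sym2.lift ⟨fun a b => B (y (v a)) (v b), hsym2⟩)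
        (x - ∑ i, B ((wb i : V)) x • v i) = 0 :=
      hker _ (hLmem _).1 (hLmem _).2 _ (hdecomp x)
    have hx : x = (x - ∑ i, B ((wb i : V)) x • v i) + ∑ i, B ((wb i : V)) x • v i :=
      (sub_add_cancel x _).symm
    have hva : ∀ a, L (Sym2.lift ⟨fun a b => B (y (v a)) (v b), hsym2⟩) (v a) = y (v a) := by
      intro a
      rw [hLapp]
      have hrep : y (v a) = ∑ i, B (y (v a)) (v i) • ((wb i : V)) :=
        hWrepr _ (hy2 ⟨v a, rfl⟩)
      rw [hrep]
      refine Finset.sum_congr rfl fun i _ => ?_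
      simp only [Sym2.lift_mk, hvw, mul_ite, mul_one, mul_zero, ite_smul, zero_smul,
        Finset.sum_ite_eq', Finset.mem_univ, if_true]
      rw [hsym2 i a]
    have h1 : L (Sym2.lift ⟨fun a b => B (y (v a)) (v b), hsym2⟩) x
        = ∑ i, B ((wb i : V)) x • L (Sym2.lift ⟨fun a b => B (y (v a)) (v b), hsym2⟩) (v i) := by
      conv_lhs => rw [hx]
      rw [map_add, hx0', zero_add, map_sum]
      simp only [map_smul]
    have h2 : y x = ∑ i, B ((wb i : V)) x • y (v i) := by
      conv_lhs => rw [hx]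
      rw [map_add, hx0, zero_add, map_sum]
      simp only [map_smul]
    rw [h1, h2]
    exact Finset.sum_congr rfl fun i _ => by rw [hva i]
  have hrange : LinearMap.range L = S :=
    le_antisymm (by rintro _ ⟨g, rfl⟩; exact hLmem g) (fun y hy => hLsurj y hy)
  rw [← hrange, LinearMap.finrank_range_of_inj hLinj, Module.finrank_fintype_fun_eq_card,
    Sym2.card, Fintype.card_fin, Nat.choose_two_right, Nat.add_sub_cancel, Nat.mul_comm]
end
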